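/- Let a ∈ ℝ, b > 0, p > 1 and T₁ ∈ ℝ. There is no C² function y : [T₁, ∞) → ℝ such that y(t) ≥ 0 for all t ≥ T₁, y(T₁) > 0, y'(T₁) > 0, and y''(t) + a y'(t) ≥ b·y(t)^p for all t ≥ T₁. -/

import Mathlib

open Real Set
open Filter Topology

lemma barrier_nonneg {G : ℝ → ℝ} {t₀ : ℝ} (hcont : ContinuousOn G (Ici t₀))
    (h0 : 0 ≤ G t₀)
    (hd : ∀ s ∈ Ici t₀, G s = 0 → ∃ d, 0 < d ∧ HasDerivWithinAt G d (Ici t₀) s) :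
    ∀ t ∈ Ici t₀, 0 ≤ G t := by
  by_contra hcon
  push_neg at hcon
  obtain ⟨t₁, ht₁, ht₁neg⟩ := hcon
  set S : Set ℝ := Icc t₀ t₁ ∩ G ⁻¹' (Ici 0) with hS
  have ht₀t₁ : t₀ ≤ t₁ := ht₁
  have hne : S.Nonempty := ⟨t₀, ⟨le_refl _, ht₀t₁⟩, h0⟩
  have hbdd : BddAbove S := ⟨t₁, fun x hx => hx.1.2⟩
  have hclosed : IsClosed S :=
    (hcont.mono (Icc_subset_Ici_self)).preimage_isClosed_of_isClosed isClosed_Icc isClosed_Ici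
  set s := sSup S with hsdef
  have hsS : s ∈ S := hclosed.csSup_mem hne hbdd
  have hs0 : (0:ℝ) ≤ G s := hsS.2
  have hst₀ : t₀ ≤ s := hsS.1.1
  have hst₁ : s ≤ t₁ := hsS.1.2
  have hslt : s < t₁ := by
    rcases lt_or_eq_of_le hst₁ with h | h
    · exact h
    · exact absurd (h ▸ hs0) (not_le.2 ht₁neg)
  have hneg : ∀ t ∈ Ioc s t₁, G t < 0 := by
    intro t ht
    by_contra hge
    push_neg at hge
    have : t ∈ S := ⟨⟨hst₀.trans ht.1.le, ht.2⟩, hge⟩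
    exact absurd (le_csSup hbdd this) (not_le.2 ht.1)
  -- G s ≤ 0 by right-continuity
  have htend : Tendsto G (𝓝[>] s) (𝓝 (G s)) := by
    have := (hcont s (le_trans hst₀ le_rfl)).tendsto_nhdsWithin_image
    have h' : ContinuousWithinAt G (Ici t₀) s := hcont s hst₀
    exact h'.tendsto.mono_left (nhdsWithin_mono s (fun x hx => hst₀.trans hx.le) )
  have hGs_le : G s ≤ 0 := by
    have hev : ∀ᶠ t in 𝓝[>] s, G t < 0 :=
      eventually_of_mem (Ioc_mem_nhdsGT hslt) hneg
    exact le_of_tendsto htend (hev.mono fun t ht => ht.le)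
  have hGs : G s = 0 := le_antisymm hGs_le hs0
  obtain ⟨d, hdpos, hder⟩ := hd s hst₀ hGs
  have hder' : HasDerivWithinAt G d (Ioi s) s :=
    hder.mono (fun x hx => hst₀.trans hx.le)
  have hslope : Tendsto (slope G s) (𝓝[>] s) (𝓝 d) := by
    have := hasDerivWithinAt_iff_tendsto_slope.1 hder'
    simpa [Ioi, diff_singleton_eq_self (notMem_Ioi.2 le_rfl)] using this
  have hev2 : ∀ᶠ t in 𝓝[>] s, 0 < slope G s t :=
    hslope.eventually (eventually_gt_nhds hdpos)
  have hev3 : ∀ᶠ t in 𝓝[>] s, G t < 0 :=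
    eventually_of_mem (Ioc_mem_nhdsGT hslt) hneg
  obtain ⟨t, htslope, htneg, hts⟩ := (hev2.and (hev3.and self_mem_nhdsWithin)).exists
  rw [slope_def_field] at htslope
  have hle : (G t - G s) / (t - s) ≤ 0 :=
    div_nonpos_of_nonpos_of_nonneg (by simp [hGs, htneg.le]) (sub_nonneg.2 hts.le)
  exact absurd hle (not_le.2 htslope)

/-- Lemma 2.4: a non-negative C² solution of `y'' + ay' ≥ b·y^p` with positive value
and positive derivative at the initial time cannot exist on all of `[T₁,∞)`. -/
theorem ode_blowup
    (a b p T₁ : ℝ) (hb : 0 < b) (hp : 1 < p) :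
    ¬ ∃ y : ℝ → ℝ,
      ContDiffOn ℝ 2 y (Ici T₁) ∧
      (∀ t ≥ T₁, 0 ≤ y t) ∧
      0 < y T₁ ∧
      0 < derivWithin y (Ici T₁) T₁ ∧
      (∀ t ≥ T₁,
        derivWithin (derivWithin y (Ici T₁)) (Ici T₁) t
          + a * derivWithin y (Ici T₁) t ≥ b * y t ^ p) := by
  rintro ⟨y, hy, hnn, hy0, hy0', hineq⟩
  set y₁ : ℝ → ℝ := derivWithin y (Ici T₁) with hy₁def
  set y₂ : ℝ → ℝ := derivWithin y₁ (Ici T₁) with hy₂def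
  have hud : UniqueDiffOn ℝ (Ici T₁) := uniqueDiffOn_Ici T₁
  have hyd : DifferentiableOn ℝ y (Ici T₁) := hy.differentiableOn two_ne_zero
  have hycont : ContinuousOn y (Ici T₁) := hy.continuousOn
  have hder_y : ∀ t ∈ Ici T₁, HasDerivWithinAt y (y₁ t) (Ici T₁) t :=
    fun t ht => (hyd t ht).hasDerivWithinAt
  have hy₁cd : ContDiffOn ℝ 1 y₁ (Ici T₁) := hy.derivWithin hud (by norm_num)
  have hy₁cont : ContinuousOn y₁ (Ici T₁) := hy₁cd.continuousOn
  have hder_y₁ : ∀ t ∈ Ici T₁, HasDerivWithinAt y₁ (y₂ t) (Ici T₁) t :=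
    fun t ht => ((hy₁cd.differentiableOn one_ne_zero) t ht).hasDerivWithinAt
  -- Step 1 : z = exp(a t) * y₁ t is monotone, hence y₁ > 0 on Ici T₁
  have hderz : ∀ t ∈ Ici T₁, HasDerivWithinAt (fun t => exp (a*t) * y₁ t)
      (exp (a*t) * (y₂ t + a * y₁ t)) (Ici T₁) t := by
    intro t ht
    have he : HasDerivAt (fun t : ℝ => exp (a*t)) (exp (a*t) * a) t :=
      (Real.hasDerivAt_exp (a*t)).comp t (by simpa using (hasDerivAt_id t).const_mul a)
    have := (he.hasDerivWithinAt.fun_mul (hder_y₁ t ht))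
    exact this.congr_deriv (by ring)
  have hy₁pos : ∀ t ∈ Ici T₁, 0 < y₁ t := by
    have hmono : MonotoneOn (fun t => exp (a*t) * y₁ t) (Ici T₁) := by
      apply monotoneOn_of_hasDerivWithinAt_nonneg (convex_Ici T₁)
        ((Real.continuous_exp.comp (continuous_const.mul continuous_id)).continuousOn.mul hy₁cont)
        (fun x hx => (hderz x (interior_subset hx)).mono interior_subset)
      intro x hx
      have hx' : x ∈ Ici T₁ := interior_subset hx
      have h1 : b * y x ^ p ≤ y₂ x + a * y₁ x := hineq x hx'
      have h2 : (0:ℝ) ≤ b * y x ^ p := mul_nonneg hb.le (rpow_nonneg (hnn x hx') p)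
      have h3 : (0:ℝ) ≤ y₂ x + a * y₁ x := le_trans h2 h1
      positivity
    intro t ht
    have h := hmono (self_mem_Ici) ht ht
    simp only at h
    have h0 : (0:ℝ) < exp (a*T₁) * y₁ T₁ := by positivity
    by_contra hc
    push_neg at hc
    have : exp (a*t) * y₁ t ≤ 0 := mul_nonpos_of_nonneg_of_nonpos (exp_pos _).le hc
    linarith
  -- Step 2 : y is monotone on Ici T₁
  have hylb : ∀ t ∈ Ici T₁, y T₁ ≤ y t := by
    have hmono : MonotoneOn y (Ici T₁) := by
      apply monotoneOn_of_hasDerivWithinAt_nonneg (convex_Ici T₁) hycont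
        (fun x hx => (hder_y x (interior_subset hx)).mono interior_subset)
      exact fun x hx => (hy₁pos x (interior_subset hx)).le
    exact fun t ht => hmono self_mem_Ici ht ht
  have hypos : ∀ t ∈ Ici T₁, 0 < y t := fun t ht => lt_of_lt_of_le hy0 (hylb t ht)
  -- constants
  set q : ℝ := (p+1)/2 with hqdef
  set r : ℝ := (p-1)/2 with hrdef
  have hq1 : 1 ≤ q := by rw [hqdef]; linarith
  have hrpos : 0 < r := by rw [hrdef]; linarith
  have hqr : q = r + 1 := by rw [hqdef, hrdef]; ring
  have hqrp : q + r = p := by rw [hqdef, hrdef]; ring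
  set m : ℝ := y T₁ ^ r with hmdef
  have hmpos : 0 < m := rpow_pos_of_pos hy0 r
  set ε : ℝ := min (min (y₁ T₁ / (y T₁ ^ q)) (Real.sqrt (b/(p+1)))) (b*m/(4*(|a|+1))) with hεdef
  have hA : (0:ℝ) < |a| + 1 := by positivity
  have hεpos : 0 < ε := by
    apply lt_min (lt_min _ _) _
    · exact div_pos hy0' (rpow_pos_of_pos hy0 q)
    · exact Real.sqrt_pos.2 (by positivity)
    · positivity
  have hε1 : ε * y T₁ ^ q ≤ y₁ T₁ := by
    calc ε * y T₁ ^ q ≤ (y₁ T₁ / (y T₁ ^ q)) * y T₁ ^ q := by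
          apply mul_le_mul_of_nonneg_right _ (rpow_nonneg hy0.le q)
          exact (min_le_left _ _).trans (min_le_left _ _)
      _ = y₁ T₁ := div_mul_cancel₀ _ (ne_of_gt (rpow_pos_of_pos hy0 q))
  have hε2 : ε^2 ≤ b/(p+1) := by
    have h : ε ≤ Real.sqrt (b/(p+1)) := (min_le_left _ _).trans (min_le_right _ _)
    calc ε^2 ≤ Real.sqrt (b/(p+1))^2 := by nlinarith [hεpos.le]
      _ = b/(p+1) := Real.sq_sqrt (by positivity)
  have hε3 : |a| * ε ≤ b*m/4 := by
    have h : ε ≤ b*m/(4*(|a|+1)) := min_le_right _ _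
    have h2 : |a| * ε ≤ |a| * (b*m/(4*(|a|+1))) := mul_le_mul_of_nonneg_left h (abs_nonneg a)
    have h3 : |a| * (b*m/(4*(|a|+1))) ≤ b*m/4 := by
      rw [← mul_div_assoc, div_le_div_iff₀ (by positivity) (by norm_num)]
      nlinarith [abs_nonneg a, hmpos, hb]
    linarith
  -- barrier: G t = y₁ t - ε * (y t)^q ≥ 0 on Ici T₁
  set G : ℝ → ℝ := fun t => y₁ t - ε * (y t) ^ q with hGdef
  have hG : ∀ t ∈ Ici T₁, 0 ≤ G t := by
    apply barrier_nonneg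
    · exact hy₁cont.sub (continuous_const.continuousOn.mul
        (hycont.rpow_const (fun x hx => Or.inl (ne_of_gt (hypos x hx)))))
    · show 0 ≤ y₁ T₁ - ε * (y T₁) ^ q
      linarith [hε1]
    · intro s hs hGs
      have hYpos : 0 < y s := hypos s hs
      have hpow : HasDerivWithinAt (fun t => (y t)^q) (y₁ s * q * (y s)^(q-1)) (Ici T₁) s :=
        (hder_y s hs).rpow_const (Or.inl (ne_of_gt hYpos))
      have hder : HasDerivWithinAt G (y₂ s - ε * (y₁ s * q * (y s)^(q-1))) (Ici T₁) s :=
        (hder_y₁ s hs).sub (hpow.const_mul ε)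
      have hG0 : y₁ s = ε * (y s)^q := by
        have h : y₁ s - ε * (y s)^q = 0 := hGs
        linarith
      have hYq : (0:ℝ) < (y s)^q := rpow_pos_of_pos hYpos q
      have hYp : (0:ℝ) < (y s)^p := rpow_pos_of_pos hYpos p
      have hmul : (y s)^q * (y s)^(q-1) = (y s)^p := by
        rw [← Real.rpow_add hYpos]
        congr 1
        rw [hqdef]; ring
      have hineqs : b * (y s)^p ≤ y₂ s + a * y₁ s := hineq s hs
      have hYr : m ≤ (y s)^r := by
        rw [hmdef]
        exact Real.rpow_le_rpow hy0.le (hylb s hs) hrpos.le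
      have hqr' : (y s)^r * (y s)^q = (y s)^p := by
        rw [← Real.rpow_add hYpos, add_comm r q, hqrp]
      have hra : a * y₁ s ≤ |a| * ε * (y s)^q := by
        calc a * y₁ s ≤ |a * y₁ s| := le_abs_self _
          _ = |a| * y₁ s := by rw [abs_mul, abs_of_nonneg (hy₁pos s hs).le]
          _ = |a| * (ε * (y s)^q) := by rw [hG0]
          _ = |a| * ε * (y s)^q := by ring
      have hbound1 : |a| * ε * (y s)^q ≤ b/4 * (y s)^p := by
        calc |a| * ε * (y s)^q ≤ (b*m/4) * (y s)^q :=
              mul_le_mul_of_nonneg_right hε3 (rpow_nonneg hYpos.le q)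
          _ = b/4 * (m * (y s)^q) := by ring
          _ ≤ b/4 * ((y s)^r * (y s)^q) := by
              apply mul_le_mul_of_nonneg_left _ (by positivity)
              exact mul_le_mul_of_nonneg_right hYr (rpow_nonneg hYpos.le q)
          _ = b/4 * (y s)^p := by rw [hqr']
      have hsub : ε * (y₁ s * q * (y s)^(q-1)) = ε^2 * q * ((y s)^q * (y s)^(q-1)) := by
        rw [hG0]; ring
      have hbound2 : ε * (y₁ s * q * (y s)^(q-1)) ≤ b/2 * (y s)^p := by
        rw [hsub, hmul]
        have hq2 : ε^2 * q ≤ b/2 := by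
          have hp1 : (0:ℝ) < p + 1 := by linarith
          have h1 : ε^2 * q ≤ (b/(p+1)) * q :=
            mul_le_mul_of_nonneg_right hε2 (by rw [hqdef]; positivity)
          have h2 : (b/(p+1)) * q = b/2 := by
            rw [hqdef]; field_simp
          linarith
        exact mul_le_mul_of_nonneg_right hq2 hYp.le
      refine ⟨y₂ s - ε * (y₁ s * q * (y s)^(q-1)), ?_, hder⟩
      have hq4 : (0:ℝ) < b/4 * (y s)^p := by positivity
      linarith [hineqs, hra, hbound1, hbound2]
  -- Step 5: contradiction via H t = (y t)^(-r)
  have hK : AntitoneOn (fun t => (y t) ^ (-r) + (ε*r) * t) (Ici T₁) := by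
    apply antitoneOn_of_hasDerivWithinAt_nonpos (convex_Ici T₁)
      (f' := fun t => y₁ t * (-r) * (y t)^(-r-1) + ε*r)
    · exact ((hycont.rpow_const (fun x hx => Or.inl (ne_of_gt (hypos x hx)))).add
        (continuous_const.mul continuous_id).continuousOn)
    · intro x hx
      have hx' : x ∈ Ici T₁ := interior_subset hx
      have hYpos : 0 < y x := hypos x hx'
      have hpow : HasDerivWithinAt (fun t => (y t)^(-r)) (y₁ x * (-r) * (y x)^(-r-1))
          (Ici T₁) x := (hder_y x hx').rpow_const (Or.inl (ne_of_gt hYpos))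
      exact ((hpow.add (((hasDerivAt_id x).const_mul (ε*r)).hasDerivWithinAt.congr_deriv
        (by ring))).mono interior_subset)
    · intro x hx
      have hx' : x ∈ Ici T₁ := interior_subset hx
      have hYpos : 0 < y x := hypos x hx'
      have hGx : ε * (y x)^q ≤ y₁ x := by
        have := hG x hx'
        simp only [hGdef] at this
        linarith
      have hpos' : (0:ℝ) < (y x)^(-r-1) := rpow_pos_of_pos hYpos _
      have hprod : (y x)^q * (y x)^(-r-1) = 1 := by
        rw [← Real.rpow_add hYpos]
        have : q + (-r-1) = 0 := by rw [hqdef, hrdef]; ring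
        rw [this, Real.rpow_zero]
      have h1 : ε * ((y x)^q * (y x)^(-r-1)) ≤ y₁ x * (y x)^(-r-1) := by
        rw [← mul_assoc]
        exact mul_le_mul_of_nonneg_right hGx hpos'.le
      rw [hprod, mul_one] at h1
      nlinarith [hrpos]
  -- derive contradiction
  set δ : ℝ := ε * r with hδdef
  have hδpos : 0 < δ := mul_pos hεpos hrpos
  set t₂ : ℝ := T₁ + ((y T₁)^(-r))/δ + 1 with ht₂def
  have hT₁pow : (0:ℝ) < (y T₁)^(-r) := rpow_pos_of_pos hy0 _
  have ht₂mem : t₂ ∈ Ici T₁ := by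
    simp only [ht₂def, mem_Ici]
    have : 0 < ((y T₁)^(-r))/δ := by positivity
    linarith
  have hanti := hK self_mem_Ici ht₂mem (by simpa using ht₂mem)
  simp only at hanti
  have hpos2 : (0:ℝ) < (y t₂)^(-r) := rpow_pos_of_pos (hypos t₂ ht₂mem) _
  have hfrac : δ * (((y T₁)^(-r))/δ) = (y T₁)^(-r) := by
    field_simp
  have ht2 : δ * t₂ = δ * T₁ + δ * ((y T₁)^(-r)/δ) + δ := by rw [ht₂def]; ring
  rw [hfrac] at ht2
  linarith [hanti, hpos2, hδpos, ht2]
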